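/- Let μ : ℝ → ℝ and suppose μ(k) ∼ −C k^{q} e^{−(k−a)²/b} as k → +∞ with constants C > 0, b > 0, a ∈ ℝ, q ∈ ℝ. Define E(k) := Λ + μ(k) for a constant Λ. Then for each sufficiently small δ > 0 any solution k(δ) of E(k) = Λ − δ with k(δ) → +∞ as δ → 0 satisfies k(δ) = √(b |log δ|) + o(√|log δ|) as δ → 0⁺. -/

import Mathlib

open Filter Set

theorem stmt_13 (μ : ℝ → ℝ) (C b a q Λ δ₀ : ℝ) (hC : 0 < C) (hb : 0 < b) (hδ₀ : 0 < δ₀)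
    (hμ : Tendsto (fun k : ℝ => μ k / (-C * k ^ q * Real.exp (-(k - a) ^ 2 / b)))
      atTop (nhds 1))
    (kf : ℝ → ℝ)
    (hsol : ∀ δ : ℝ, δ ∈ Ioo 0 δ₀ → Λ + μ (kf δ) = Λ - δ)
    (hkf : Tendsto kf (nhdsWithin 0 (Ioi 0)) atTop) :
    Tendsto (fun δ : ℝ =>
        (kf δ - Real.sqrt (b * |Real.log δ|)) / Real.sqrt |Real.log δ|)
      (nhdsWithin 0 (Ioi 0)) (nhds 0) := by
  set l := nhdsWithin (0:ℝ) (Ioi (0:ℝ)) with hl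
  set r : ℝ → ℝ := fun k => μ k / (-C * k ^ q * Real.exp (-(k - a) ^ 2 / b)) with hrdef
  set g := kf with hgdef
  set L : ℝ → ℝ := fun δ => -Real.log δ with hLdef
  have hg : Tendsto g l atTop := hkf
  have hrg : Tendsto (fun δ => r (g δ)) l (nhds 1) := hμ.comp hg
  have hmem : ∀ᶠ δ in l, δ ∈ Ioo 0 δ₀ := Ioo_mem_nhdsGT_of_mem ⟨le_refl 0, hδ₀⟩
  have hgpos : ∀ᶠ δ in l, 0 < g δ := hg.eventually (eventually_gt_atTop 0)
  have hrpos : ∀ᶠ δ in l, 0 < r (g δ) := hrg.eventually (eventually_gt_nhds one_pos)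
  -- key log equation
  have hlog : ∀ᶠ δ in l, Real.log δ =
      Real.log (r (g δ)) + Real.log C + q * Real.log (g δ) - (g δ - a) ^ 2 / b := by
    filter_upwards [hmem, hgpos, hrpos] with δ hδ hp hrp
    have hμg : μ (g δ) = -δ := by have := hsol δ hδ; linarith
    have h1 : (0:ℝ) < (g δ) ^ q := Real.rpow_pos_of_pos hp q
    have h2 : (0:ℝ) < Real.exp (-(g δ - a) ^ 2 / b) := Real.exp_pos _
    have hd : (-C * (g δ) ^ q * Real.exp (-(g δ - a) ^ 2 / b)) ≠ 0 := by
      intro h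
      nlinarith [mul_pos (mul_pos hC h1) h2]
    have hμeq : μ (g δ) = r (g δ) * (-C * (g δ) ^ q * Real.exp (-(g δ - a) ^ 2 / b)) :=
      (div_mul_cancel₀ (μ (g δ)) hd).symm
    have hδeq : δ = r (g δ) * (C * ((g δ) ^ q * Real.exp (-(g δ - a) ^ 2 / b))) := by
      rw [hμg] at hμeq
      linear_combination -hμeq
    conv_lhs => rw [hδeq]
    rw [Real.log_mul (ne_of_gt hrp) (ne_of_gt (mul_pos hC (mul_pos h1 h2))),
      Real.log_mul (ne_of_gt hC) (ne_of_gt (mul_pos h1 h2)),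
      Real.log_mul (ne_of_gt h1) (ne_of_gt h2),
      Real.log_rpow hp, Real.log_exp]
    ring
  -- L / g^2 → 1/b
  have hf1 : Tendsto (fun δ => (g δ - a) ^ 2 / b / (g δ) ^ 2) l (nhds (1 / b)) := by
    have h0 : Tendsto (fun k : ℝ => (k - a) ^ 2 / b / k ^ 2) atTop (nhds (1 / b)) := by
      have h1 : Tendsto (fun k : ℝ => (1 - a / k) ^ 2 / b) atTop (nhds (1 / b)) := by
        have ha : Tendsto (fun k : ℝ => a / k) atTop (nhds 0) :=
          tendsto_const_nhds.div_atTop tendsto_id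
        have h2 : Tendsto (fun k : ℝ => (1 - a / k) ^ 2) atTop (nhds ((1 - 0) ^ 2)) :=
          (tendsto_const_nhds.sub ha).pow 2
        simpa using h2.div_const b
      refine h1.congr' ?_
      filter_upwards [eventually_gt_atTop (0:ℝ)] with k hk
      have hkne : k ≠ 0 := hk.ne'
      have h1' : 1 - a / k = (k - a) / k := by field_simp
      rw [h1', div_pow, div_div, div_div, mul_comm b (k ^ 2)]
    exact h0.comp hg
  have hg2 : Tendsto (fun δ => (g δ) ^ 2) l atTop :=
    (tendsto_pow_atTop two_ne_zero).comp hg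
  have hg2inv : Tendsto (fun δ => ((g δ) ^ 2)⁻¹) l (nhds 0) := hg2.inv_tendsto_atTop
  have hf2 : Tendsto (fun δ => Real.log (r (g δ)) / (g δ) ^ 2) l (nhds 0) := by
    have hlr : Tendsto (fun δ => Real.log (r (g δ))) l (nhds 0) := by
      have := (Real.continuousAt_log one_ne_zero).tendsto.comp hrg
      simpa [Function.comp_def] using this
    simpa [div_eq_mul_inv] using hlr.mul hg2inv
  have hf3 : Tendsto (fun δ => Real.log C / (g δ) ^ 2) l (nhds 0) := by
    simpa [div_eq_mul_inv] using (tendsto_const_nhds (x := Real.log C)).mul hg2inv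
  have hf4 : Tendsto (fun δ => q * Real.log (g δ) / (g δ) ^ 2) l (nhds 0) := by
    have h0 : Tendsto (fun k : ℝ => Real.log k / k ^ 2) atTop (nhds 0) := by
      have h1 : Tendsto (fun k : ℝ => Real.log k / k) atTop (nhds 0) :=
        Real.isLittleO_log_id_atTop.tendsto_div_nhds_zero
      have h2 : Tendsto (fun k : ℝ => k⁻¹) atTop (nhds (0:ℝ)) := tendsto_inv_atTop_zero
      have h3 := h1.mul h2
      refine (by simpa using h3 : Tendsto (fun k : ℝ => Real.log k / k * k⁻¹) atTop
        (nhds 0)).congr fun k => ?_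
      simp [div_eq_mul_inv, sq, mul_inv, mul_assoc]
    have := (tendsto_const_nhds (x := q)).mul (h0.comp hg)
    simpa [mul_div_assoc, Function.comp] using this
  have hLg : Tendsto (fun δ => L δ / (g δ) ^ 2) l (nhds (1 / b)) := by
    have hcomb := ((hf1.sub hf2).sub hf3).sub hf4
    have hcomb' : Tendsto (fun δ => (g δ - a) ^ 2 / b / (g δ) ^ 2
        - Real.log (r (g δ)) / (g δ) ^ 2 - Real.log C / (g δ) ^ 2
        - q * Real.log (g δ) / (g δ) ^ 2) l (nhds (1 / b)) := by simpa using hcomb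
    refine hcomb'.congr' ?_
    filter_upwards [hlog] with δ hδ
    rw [hLdef]
    simp only
    rw [hδ]
    ring
  have hbL : Tendsto (fun δ => b * L δ / (g δ) ^ 2) l (nhds 1) := by
    have := hLg.const_mul b
    have hval : b * (1 / b) = 1 := by field_simp
    rw [hval] at this
    exact this.congr fun δ => by ring
  have hbLpos : ∀ᶠ δ in l, 0 < b * L δ := by
    filter_upwards [hbL.eventually (eventually_gt_nhds one_pos), hgpos] with δ h1 hp
    have hg2p : (0:ℝ) < (g δ) ^ 2 := by positivity
    by_contra h
    push_neg at h
    have : b * L δ / (g δ) ^ 2 ≤ 0 := div_nonpos_of_nonpos_of_nonneg h hg2p.le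
    linarith
  have hLpos : ∀ᶠ δ in l, 0 < L δ := by
    filter_upwards [hbLpos] with δ h
    nlinarith
  have hsq1 : Tendsto (fun δ => Real.sqrt (b * L δ) / g δ) l (nhds 1) := by
    have h := (Real.continuous_sqrt.tendsto 1).comp hbL
    rw [show Real.sqrt 1 = 1 from Real.sqrt_one] at h
    refine h.congr' ?_
    filter_upwards [hgpos, hbLpos] with δ hp hbl
    simp only [Function.comp]
    rw [Real.sqrt_div hbl.le, Real.sqrt_sq hp.le]
  have hsq2 : Tendsto (fun δ => Real.sqrt (L δ) / g δ) l (nhds (Real.sqrt (1 / b))) := by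
    have h := (Real.continuous_sqrt.tendsto (1 / b)).comp hLg
    refine h.congr' ?_
    filter_upwards [hgpos, hLpos] with δ hp hLp
    simp only [Function.comp]
    rw [Real.sqrt_div hLp.le, Real.sqrt_sq hp.le]
  have hginv : Tendsto (fun δ => g δ / Real.sqrt (L δ)) l (nhds (Real.sqrt b)) := by
    have hne : Real.sqrt (1 / b) ≠ 0 := by positivity
    have := hsq2.inv₀ hne
    have hval : (Real.sqrt (1 / b))⁻¹ = Real.sqrt b := by
      rw [one_div, Real.sqrt_inv, inv_inv]
    rw [hval] at this
    exact this.congr fun δ => by rw [inv_div]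
  have target0 : Tendsto (fun δ => (1 - Real.sqrt (b * L δ) / g δ) * (g δ / Real.sqrt (L δ)))
      l (nhds 0) := by
    have h2 : Tendsto (fun δ => 1 - Real.sqrt (b * L δ) / g δ) l (nhds (1 - 1)) :=
      tendsto_const_nhds.sub hsq1
    have h3 := h2.mul hginv
    simpa using h3
  refine target0.congr' ?_
  have hmem1 : ∀ᶠ δ in l, δ ∈ Ioo (0:ℝ) 1 := Ioo_mem_nhdsGT_of_mem ⟨le_refl 0, one_pos⟩
  filter_upwards [hmem1, hgpos, hLpos] with δ hδ hp hLp
  have habs : |Real.log δ| = L δ := by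
    rw [hLdef]
    exact abs_of_neg (Real.log_neg hδ.1 hδ.2)
  rw [habs]
  have hsL : Real.sqrt (L δ) ≠ 0 := by positivity
  field_simp
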